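/- arXiv:math/0501464 — 4 statements merged into one kernel-verified Lean document; each statement's English description precedes it below -/
import Mathlib

section
/- In the (2,3,7) triangle group Δ₂₃₇ = ⟨a, b, c | a² = b³ = c⁷ = cba = 1⟩, the three elements L₁ = c^{ac}, L₂ = c^{ac⁻³}, L₃ = c^{ac⁻²} generate Δ₂₃₇. -/
/-- Relations of the (2,3,n) triangle-type group ⟨a,b,c | a² = b³ = cⁿ = cba = 1⟩,
with generators indexed 0 ↦ a, 1 ↦ b, 2 ↦ c. -/
def triangleRels (n : ℕ) : Set (FreeGroup (Fin 3)) :=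
  {FreeGroup.of 0 ^ 2, FreeGroup.of 1 ^ 3, FreeGroup.of 2 ^ n,
    FreeGroup.of 2 * FreeGroup.of 1 * FreeGroup.of 0}

/-- Every relation maps to 1 in the presented group. -/
lemma triangle_rel_one {n : ℕ} {r : FreeGroup (Fin 3)} (h : r ∈ triangleRels n) :
    PresentedGroup.mk (triangleRels n) r = 1 :=
  (QuotientGroup.eq_one_iff r).2 (Subgroup.subset_normalClosure h)

/-- In the (2,3,7) triangle group Δ₂₃₇ = ⟨a,b,c | a² = b³ = c⁷ = cba = 1⟩, the elements
L₁ = c^{ac}, L₂ = c^{ac⁻³}, L₃ = c^{ac⁻²} (where x^y := y⁻¹xy) generate Δ₂₃₇. -/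
theorem klein_words_generate_237 :
    let a : PresentedGroup (triangleRels 7) := PresentedGroup.of 0
    let c : PresentedGroup (triangleRels 7) := PresentedGroup.of 2
    Subgroup.closure
      {(a * c)⁻¹ * c * (a * c),
       (a * (c⁻¹) ^ 3)⁻¹ * c * (a * (c⁻¹) ^ 3),
       (a * (c⁻¹) ^ 2)⁻¹ * c * (a * (c⁻¹) ^ 2)} =
      (⊤ : Subgroup (PresentedGroup (triangleRels 7))) := by
  intro a c
  set b : PresentedGroup (triangleRels 7) := PresentedGroup.of 1 with hbdef
  have ha : a ^ 2 = 1 := by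
    have h := triangle_rel_one (n := 7) (r := FreeGroup.of 0 ^ 2) (by left; rfl)
    rw [map_pow] at h; exact h
  have hb : b ^ 3 = 1 := by
    have h := triangle_rel_one (n := 7) (r := FreeGroup.of 1 ^ 3) (by right; left; rfl)
    rw [map_pow] at h; exact h
  have hcba : c * b * a = 1 := by
    have h := triangle_rel_one (n := 7)
      (r := FreeGroup.of 2 * FreeGroup.of 1 * FreeGroup.of 0) (by right; right; right; rfl)
    rw [map_mul, map_mul] at h; exact h
  have hainv : a⁻¹ = a := by
    have h := ha
    rw [pow_two] at h
    exact inv_eq_of_mul_eq_one_right h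
  have hbval : b = c⁻¹ * a⁻¹ := by
    rw [mul_assoc] at hcba
    have h1 : b * a = c⁻¹ := eq_inv_of_mul_eq_one_right hcba
    rw [eq_mul_inv_iff_mul_eq]
    exact h1
  have hac : (a * c) ^ 3 = 1 := by
    have h1 : (c⁻¹ * a⁻¹) ^ 3 = 1 := by rw [← hbval]; exact hb
    have h2 : ((c⁻¹ * a⁻¹) ^ 3)⁻¹ = 1 := by rw [h1]; simp
    rw [← inv_pow, mul_inv_rev, inv_inv, inv_inv] at h2
    exact h2
  have key : a * c * a * c * a = c⁻¹ := by
    rw [eq_inv_iff_mul_eq_one]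
    simp only [pow_succ, pow_zero, one_mul] at hac
    simpa [mul_assoc] using hac
  set g : PresentedGroup (triangleRels 7) := a * (c⁻¹) ^ 2 with hg
  set S : Set (PresentedGroup (triangleRels 7)) :=
      {(a * c)⁻¹ * c * (a * c),
       (a * (c⁻¹) ^ 3)⁻¹ * c * (a * (c⁻¹) ^ 3),
       (a * (c⁻¹) ^ 2)⁻¹ * c * (a * (c⁻¹) ^ 2)} with hS
  have h3 : (MulAut.conj g) ((a * (c⁻¹) ^ 2)⁻¹ * c * (a * (c⁻¹) ^ 2)) = c := by
    rw [MulAut.conj_apply, hg]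
    simp [mul_assoc]
  have h2 : (MulAut.conj g) ((a * (c⁻¹) ^ 3)⁻¹ * c * (a * (c⁻¹) ^ 3)) = c⁻¹ * c⁻¹ * a := by
    rw [MulAut.conj_apply, hg]
    have step1 : (a * (c⁻¹) ^ 2) * ((a * (c⁻¹) ^ 3)⁻¹ * c * (a * (c⁻¹) ^ 3)) * (a * (c⁻¹) ^ 2)⁻¹
        = a * (c * (a⁻¹ * (c * (a * (c⁻¹ * a⁻¹))))) := by
      simp [mul_inv_rev, inv_pow, pow_succ, mul_assoc]
    rw [step1, hainv]
    have : a * (c * (a * (c * (a * (c⁻¹ * a))))) = (a * c * a * c * a) * (c⁻¹ * a) := by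
      simp [mul_assoc]
    rw [this, key]
    simp [mul_assoc]
  have hmap : Subgroup.map (MulAut.conj g).toMonoidHom (Subgroup.closure S) = ⊤ := by
    rw [MonoidHom.map_closure, eq_top_iff]
    intro x _
    refine PresentedGroup.generated_by _ _ (fun j => ?_) x
    have hcmem : c ∈ Subgroup.closure ((MulAut.conj g).toMonoidHom '' S) :=
      Subgroup.subset_closure ⟨_, by right; right; rfl, h3⟩
    have hXmem : c⁻¹ * c⁻¹ * a ∈ Subgroup.closure ((MulAut.conj g).toMonoidHom '' S) :=
      Subgroup.subset_closure ⟨_, by right; left; rfl, h2⟩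
    have hamem : a ∈ Subgroup.closure ((MulAut.conj g).toMonoidHom '' S) := by
      have h : a = c * c * (c⁻¹ * c⁻¹ * a) := by simp [mul_assoc]
      rw [h]
      exact Subgroup.mul_mem _ (Subgroup.mul_mem _ hcmem hcmem) hXmem
    fin_cases j
    · exact hamem
    · show b ∈ _
      rw [hbval]
      exact Subgroup.mul_mem _ (Subgroup.inv_mem _ hcmem) (Subgroup.inv_mem _ hamem)
    · exact hcmem
  have hinj : Function.Injective (MulAut.conj g).toMonoidHom := (MulAut.conj g).injective
  have hcm := Subgroup.comap_map_eq_self_of_injective hinj (Subgroup.closure S)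
  rw [← hcm, hmap]
  simp
end

section
/- The function y(t) = √t satisfies the sixth Painlevé equation with parameters α = 1/18, β = −1/18, γ = 2/9, δ = 5/18 on the domain t ∈ (0, 1). -/
/-- y(t) = √t solves Painlevé VI with parameters α = 1/18, β = −1/18, γ = 2/9,
δ = 5/18 on (0,1). -/
theorem sqrt_solves_PVI :
    ∀ t ∈ Set.Ioo (0 : ℝ) 1,
      let y : ℝ → ℝ := fun t => Real.sqrt t
      deriv (deriv y) t =
        (1 / 2) * (1 / y t + 1 / (y t - 1) + 1 / (y t - t)) * (deriv y t) ^ 2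
          - (1 / t + 1 / (t - 1) + 1 / (y t - t)) * deriv y t
          + y t * (y t - 1) * (y t - t) / (t ^ 2 * (t - 1) ^ 2) *
            ((1 / 18) + (-1 / 18) * t / (y t) ^ 2 + (2 / 9) * (t - 1) / (y t - 1) ^ 2
              + (5 / 18) * t * (t - 1) / (y t - t) ^ 2) := by
  intro t ht y
  obtain ⟨ht0, ht1⟩ := ht
  have ht0' : t ≠ 0 := ne_of_gt ht0
  set s := Real.sqrt t with hs
  have hs2 : s ^ 2 = t := Real.sq_sqrt ht0.le
  have hs0 : 0 < s := Real.sqrt_pos.mpr ht0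
  have hs1 : s < 1 := by
    rw [hs, show (1:ℝ) = Real.sqrt 1 by simp]
    exact Real.sqrt_lt_sqrt ht0.le ht1
  have hd1 : deriv y t = 1 / (2 * s) := (Real.hasDerivAt_sqrt ht0').deriv
  -- second derivative
  have hev : deriv y =ᶠ[nhds t] fun x => 1 / (2 * Real.sqrt x) := by
    filter_upwards [eventually_ne_nhds ht0'] with x hx
    exact (Real.hasDerivAt_sqrt hx).deriv
  have hd2 : deriv (deriv y) t = -(2 * (1 / (2 * s))) / (2 * s) ^ 2 := by
    rw [hev.deriv_eq]
    have h1 : HasDerivAt (fun x => 2 * Real.sqrt x) (2 * (1 / (2 * s))) t :=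
      (Real.hasDerivAt_sqrt ht0').const_mul 2
    have h2 : HasDerivAt (fun x => (2 * Real.sqrt x)⁻¹)
        (-(2 * (1 / (2 * s))) / (2 * s) ^ 2) t := h1.inv (by positivity)
    simpa [one_div] using h2.deriv
  have hy : y t = s := rfl
  rw [hy, hd1, hd2, ← hs2]
  have h1 : s - 1 ≠ 0 := sub_ne_zero.mpr (ne_of_lt hs1)
  have h2 : s - s ^ 2 ≠ 0 := by nlinarith
  have h3 : s ^ 2 - 1 ≠ 0 := by nlinarith
  have h4 : s ≠ 0 := ne_of_gt hs0
  have h5 : 1 - s ≠ 0 := sub_ne_zero.mpr (ne_of_gt hs1)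
  field_simp
  ring
end

section
/- Let y(s) = s²(s+2)/(s²+s+1) and t(s) = s³(s+2)/(2s+1). Then on any open set of real s where the denominators and dt/ds are nonzero, the function Y defined locally by Y(t(s)) = y(s) satisfies the sixth Painlevé equation with parameters α = 1/8, β = −1/8, γ = 1/8, δ = 3/8. -/
lemma hp_pos (x : ℝ) : x ^ 2 + x + 1 ≠ 0 := by nlinarith [sq_nonneg (x + 1/2)]

lemma hdy (x : ℝ) :
    HasDerivAt (fun s : ℝ => s ^ 2 * (s + 2) / (s ^ 2 + s + 1))
      ((x ^ 4 + 2*x ^ 3 + 5*x ^ 2 + 4*x) / (x ^ 2 + x + 1) ^ 2) x := by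
  have hn : HasDerivAt (fun s : ℝ => s ^ 2 * (s + 2)) (3*x ^ 2 + 4*x) x := by
    have h := (hasDerivAt_pow 2 x).mul ((hasDerivAt_id x).add_const 2)
    refine h.congr_deriv (Eq.symm ?_)
    norm_num; ring
  have hd : HasDerivAt (fun s : ℝ => s ^ 2 + s + 1) (2*x + 1) x := by
    have h := ((hasDerivAt_pow 2 x).add (hasDerivAt_id x)).add_const 1
    refine h.congr_deriv (Eq.symm ?_)
    norm_num
  have h := hn.div hd (hp_pos x)
  refine h.congr_deriv (Eq.symm ?_)
  rw [div_eq_div_iff (pow_ne_zero _ (hp_pos x)) (pow_ne_zero _ (hp_pos x))]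
  ring

lemma hdt (x : ℝ) (hx : 2*x + 1 ≠ 0) :
    HasDerivAt (fun s : ℝ => s ^ 3 * (s + 2) / (2 * s + 1))
      ((6*x ^ 4 + 12*x ^ 3 + 6*x ^ 2) / (2*x + 1) ^ 2) x := by
  have hn : HasDerivAt (fun s : ℝ => s ^ 3 * (s + 2)) (4*x ^ 3 + 6*x ^ 2) x := by
    have h := (hasDerivAt_pow 3 x).mul ((hasDerivAt_id x).add_const 2)
    refine h.congr_deriv (Eq.symm ?_)
    norm_num; ring
  have hd : HasDerivAt (fun s : ℝ => 2 * s + 1) (2 : ℝ) x := by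
    have h := ((hasDerivAt_id x).const_mul 2).add_const 1
    refine h.congr_deriv (Eq.symm ?_)
    norm_num
  have h := hn.div hd hx
  refine h.congr_deriv (Eq.symm ?_)
  have h2 : (2*x+1)^2 ≠ 0 := pow_ne_zero _ hx
  rw [div_eq_div_iff h2 h2]
  ring

lemma hdy2 (x : ℝ) :
    HasDerivAt (fun s : ℝ => (s ^ 4 + 2*s ^ 3 + 5*s ^ 2 + 4*s) / (s ^ 2 + s + 1) ^ 2)
      (((4*x ^ 3 + 6*x ^ 2 + 10*x + 4) * (x ^ 2 + x + 1) ^ 2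
          - (x ^ 4 + 2*x ^ 3 + 5*x ^ 2 + 4*x) * (2 * (x ^ 2 + x + 1) * (2*x + 1)))
        / (x ^ 2 + x + 1) ^ 4) x := by
  have hn : HasDerivAt (fun s : ℝ => s ^ 4 + 2*s ^ 3 + 5*s ^ 2 + 4*s)
      (4*x ^ 3 + 6*x ^ 2 + 10*x + 4) x := by
    have h := (((hasDerivAt_pow 4 x).add ((hasDerivAt_pow 3 x).const_mul 2)).add
      ((hasDerivAt_pow 2 x).const_mul 5)).add ((hasDerivAt_id x).const_mul 4)
    refine h.congr_deriv (Eq.symm ?_)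
    norm_num; ring
  have hd0 : HasDerivAt (fun s : ℝ => s ^ 2 + s + 1) (2*x + 1) x := by
    have h := ((hasDerivAt_pow 2 x).add (hasDerivAt_id x)).add_const 1
    refine h.congr_deriv (Eq.symm ?_)
    norm_num
  have hd : HasDerivAt (fun s : ℝ => (s ^ 2 + s + 1) ^ 2)
      (2 * (x ^ 2 + x + 1) * (2*x + 1)) x := by
    have h := hd0.pow 2
    refine h.congr_deriv (Eq.symm ?_)
    norm_num
  have h := hn.div hd (pow_ne_zero _ (hp_pos x))
  refine h.congr_deriv (Eq.symm ?_)
  rw [div_eq_div_iff (pow_ne_zero _ (hp_pos x)) (by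
    exact pow_ne_zero _ (pow_ne_zero _ (hp_pos x)))]
  ring

lemma hdt2 (x : ℝ) (hx : 2*x + 1 ≠ 0) :
    HasDerivAt (fun s : ℝ => (6*s ^ 4 + 12*s ^ 3 + 6*s ^ 2) / (2*s + 1) ^ 2)
      (((24*x ^ 3 + 36*x ^ 2 + 12*x) * (2*x + 1) ^ 2
          - (6*x ^ 4 + 12*x ^ 3 + 6*x ^ 2) * (2 * (2*x + 1) * 2))
        / (2*x + 1) ^ 4) x := by
  have hn : HasDerivAt (fun s : ℝ => 6*s ^ 4 + 12*s ^ 3 + 6*s ^ 2)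
      (24*x ^ 3 + 36*x ^ 2 + 12*x) x := by
    have h := (((hasDerivAt_pow 4 x).const_mul 6).add ((hasDerivAt_pow 3 x).const_mul 12)).add
      ((hasDerivAt_pow 2 x).const_mul 6)
    refine h.congr_deriv (Eq.symm ?_)
    norm_num; ring
  have hd0 : HasDerivAt (fun s : ℝ => 2 * s + 1) (2 : ℝ) x := by
    have h := ((hasDerivAt_id x).const_mul 2).add_const 1
    refine h.congr_deriv (Eq.symm ?_)
    norm_num
  have hd : HasDerivAt (fun s : ℝ => (2*s + 1) ^ 2) (2 * (2*x + 1) * 2) x := by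
    have h := hd0.pow 2
    refine h.congr_deriv (Eq.symm ?_)
    norm_num
  have h := hn.div hd (pow_ne_zero _ hx)
  refine h.congr_deriv (Eq.symm ?_)
  rw [div_eq_div_iff (pow_ne_zero _ hx) (pow_ne_zero _ (pow_ne_zero _ hx))]
  ring

lemma E1gen (x : ℝ) (hx0 : x ≠ 0) (hxm1 : x + 1 ≠ 0) (hxq : 2*x + 1 ≠ 0) :
    (x ^ 4 + 2*x ^ 3 + 5*x ^ 2 + 4*x) / (x ^ 2 + x + 1) ^ 2
        / ((6*x ^ 4 + 12*x ^ 3 + 6*x ^ 2) / (2*x + 1) ^ 2)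
      = (4*x ^ 4 + 8*x ^ 3 + 21*x ^ 2 + 17*x + 4)
          / (6*x ^ 6 + 18*x ^ 5 + 30*x ^ 4 + 30*x ^ 3 + 18*x ^ 2 + 6*x) := by
  have hC : (6*x ^ 4 + 12*x ^ 3 + 6*x ^ 2 : ℝ) ≠ 0 := by
    have e : (6*x ^ 4 + 12*x ^ 3 + 6*x ^ 2 : ℝ) = 6 * (x * (x + 1)) ^ 2 := by ring
    rw [e]
    exact mul_ne_zero (by norm_num) (pow_ne_zero _ (mul_ne_zero hx0 hxm1))
  have hD : (6*x ^ 6 + 18*x ^ 5 + 30*x ^ 4 + 30*x ^ 3 + 18*x ^ 2 + 6*x : ℝ) ≠ 0 := by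
    have e : (6*x ^ 6 + 18*x ^ 5 + 30*x ^ 4 + 30*x ^ 3 + 18*x ^ 2 + 6*x : ℝ)
        = 6 * x * (x + 1) * (x ^ 2 + x + 1) ^ 2 := by ring
    rw [e]
    exact mul_ne_zero (mul_ne_zero (mul_ne_zero (by norm_num) hx0) hxm1)
      (pow_ne_zero _ (hp_pos x))
  rw [div_div_div_eq, div_eq_div_iff (mul_ne_zero (pow_ne_zero _ (hp_pos x)) hC) hD]
  ring

lemma hY1' (x : ℝ) (hx0 : x ≠ 0) (hxm1 : x + 1 ≠ 0) :
    HasDerivAt (fun z : ℝ => (4*z ^ 4 + 8*z ^ 3 + 21*z ^ 2 + 17*z + 4)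
        / (6*z ^ 6 + 18*z ^ 5 + 30*z ^ 4 + 30*z ^ 3 + 18*z ^ 2 + 6*z))
      (((16*x ^ 3 + 24*x ^ 2 + 42*x + 17)
          * (6*x ^ 6 + 18*x ^ 5 + 30*x ^ 4 + 30*x ^ 3 + 18*x ^ 2 + 6*x)
        - (4*x ^ 4 + 8*x ^ 3 + 21*x ^ 2 + 17*x + 4)
          * (36*x ^ 5 + 90*x ^ 4 + 120*x ^ 3 + 90*x ^ 2 + 36*x + 6))
        / (6*x ^ 6 + 18*x ^ 5 + 30*x ^ 4 + 30*x ^ 3 + 18*x ^ 2 + 6*x) ^ 2) x := by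
  have hD : (6*x ^ 6 + 18*x ^ 5 + 30*x ^ 4 + 30*x ^ 3 + 18*x ^ 2 + 6*x : ℝ) ≠ 0 := by
    have e : (6*x ^ 6 + 18*x ^ 5 + 30*x ^ 4 + 30*x ^ 3 + 18*x ^ 2 + 6*x : ℝ)
        = 6 * x * (x + 1) * (x ^ 2 + x + 1) ^ 2 := by ring
    rw [e]
    exact mul_ne_zero (mul_ne_zero (mul_ne_zero (by norm_num) hx0) hxm1)
      (pow_ne_zero _ (hp_pos x))
  have hn : HasDerivAt (fun z : ℝ => 4*z ^ 4 + 8*z ^ 3 + 21*z ^ 2 + 17*z + 4)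
      (16*x ^ 3 + 24*x ^ 2 + 42*x + 17) x := by
    have h := (((((hasDerivAt_pow 4 x).const_mul 4).add ((hasDerivAt_pow 3 x).const_mul 8)).add
      ((hasDerivAt_pow 2 x).const_mul 21)).add ((hasDerivAt_id x).const_mul 17)).add_const 4
    refine h.congr_deriv (Eq.symm ?_)
    norm_num; ring
  have hd : HasDerivAt (fun z : ℝ => 6*z ^ 6 + 18*z ^ 5 + 30*z ^ 4 + 30*z ^ 3 + 18*z ^ 2 + 6*z)
      (36*x ^ 5 + 90*x ^ 4 + 120*x ^ 3 + 90*x ^ 2 + 36*x + 6) x := by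
    have h := ((((((hasDerivAt_pow 6 x).const_mul 6).add ((hasDerivAt_pow 5 x).const_mul 18)).add
      ((hasDerivAt_pow 4 x).const_mul 30)).add ((hasDerivAt_pow 3 x).const_mul 30)).add
      ((hasDerivAt_pow 2 x).const_mul 18)).add ((hasDerivAt_id x).const_mul 6)
    refine h.congr_deriv (Eq.symm ?_)
    norm_num; ring
  exact hn.div hd hD

set_option maxHeartbeats 1000000 in
/-- The 4-branch dihedral solution y(s) = s²(s+2)/(s²+s+1), t(s) = s³(s+2)/(2s+1) of Painlevé VI with α = 1/8, β = −1/8, γ = 1/8, δ = 3/8 (θ = (1/2,1/2,1/2,1/2)). -/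
theorem parametric_PVI_solution_12 :
    let y : ℝ → ℝ := fun s => s ^ 2 * (s + 2) / (s ^ 2 + s + 1)
    let t : ℝ → ℝ := fun s => s ^ 3 * (s + 2) / (2 * s + 1)
    let Y₁ : ℝ → ℝ := fun s => deriv y s / deriv t s
    let Y₂ : ℝ → ℝ := fun s => deriv Y₁ s / deriv t s
    ∀ s : ℝ, (s ^ 2 + s + 1) * (2 * s + 1) ≠ 0 → deriv t s ≠ 0 →
      t s ≠ 0 → t s ≠ 1 → y s ≠ 0 → y s ≠ 1 → y s ≠ t s →
      Y₂ s =
        (1 / 2) * (1 / y s + 1 / (y s - 1) + 1 / (y s - t s)) * (Y₁ s) ^ 2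
          - (1 / t s + 1 / (t s - 1) + 1 / (y s - t s)) * Y₁ s
          + y s * (y s - 1) * (y s - t s) / ((t s) ^ 2 * (t s - 1) ^ 2) *
            ((1 / 8) + (-1 / 8) * t s / (y s) ^ 2 + (1 / 8) * (t s - 1) / (y s - 1) ^ 2
              + (3 / 8) * t s * (t s - 1) / (y s - t s) ^ 2) := by
  intro y t Y₁ Y₂ s hpq hdts ht0 ht1 hy0 hy1 hyt
  have hq : (2*s + 1 : ℝ) ≠ 0 := right_ne_zero_of_mul hpq
  simp only [y, t, Y₁, Y₂] at *
  have hs0 : s ≠ 0 := by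
    intro h; exact hy0 (by rw [h]; norm_num)
  have hs2 : s + 2 ≠ 0 := by
    intro h
    have : s = -2 := by linarith
    exact hy0 (by rw [this]; norm_num)
  have hs1 : s - 1 ≠ 0 := by
    intro h
    have : s = 1 := by linarith
    exact hy1 (by rw [this]; norm_num)
  have hsm1 : s + 1 ≠ 0 := by
    intro h
    have : s = -1 := by linarith
    exact ht1 (by rw [this]; norm_num)
  have hC : (6*s ^ 4 + 12*s ^ 3 + 6*s ^ 2 : ℝ) ≠ 0 := by
    have e : (6*s ^ 4 + 12*s ^ 3 + 6*s ^ 2 : ℝ) = 6 * (s * (s + 1)) ^ 2 := by ring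
    rw [e]
    exact mul_ne_zero (by norm_num) (pow_ne_zero _ (mul_ne_zero hs0 hsm1))
  have hD : (6*s ^ 6 + 18*s ^ 5 + 30*s ^ 4 + 30*s ^ 3 + 18*s ^ 2 + 6*s : ℝ) ≠ 0 := by
    have e : (6*s ^ 6 + 18*s ^ 5 + 30*s ^ 4 + 30*s ^ 3 + 18*s ^ 2 + 6*s : ℝ)
        = 6 * s * (s + 1) * (s ^ 2 + s + 1) ^ 2 := by ring
    rw [e]
    exact mul_ne_zero (mul_ne_zero (mul_ne_zero (by norm_num) hs0) hsm1)
      (pow_ne_zero _ (hp_pos s))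
  have h_t : deriv (fun s : ℝ => s ^ 3 * (s + 2) / (2 * s + 1)) s
      = (6*s ^ 4 + 12*s ^ 3 + 6*s ^ 2) / (2*s + 1) ^ 2 := (hdt s hq).deriv
  -- eventual equality of Y₁ with its lowest-terms form
  have hev_ne : ∀ᶠ x in nhds s, x ≠ 0 ∧ (x + 1 ≠ 0 ∧ (2*x + 1 : ℝ) ≠ 0) := by
    refine Filter.Eventually.and ?_ (Filter.Eventually.and ?_ ?_)
    · exact continuousAt_id.eventually_ne hs0
    · exact (by fun_prop : ContinuousAt (fun x : ℝ => x + 1) s).eventually_ne hsm1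
    · exact (by fun_prop : ContinuousAt (fun x : ℝ => 2*x + 1) s).eventually_ne hq
  have hev : (fun x => deriv (fun s : ℝ => s ^ 2 * (s + 2) / (s ^ 2 + s + 1)) x
        / deriv (fun s : ℝ => s ^ 3 * (s + 2) / (2 * s + 1)) x)
      =ᶠ[nhds s] (fun x => (4*x ^ 4 + 8*x ^ 3 + 21*x ^ 2 + 17*x + 4)
        / (6*x ^ 6 + 18*x ^ 5 + 30*x ^ 4 + 30*x ^ 3 + 18*x ^ 2 + 6*x)) := by
    filter_upwards [hev_ne] with x hx
    rw [(hdy x).deriv, (hdt x hx.2.2).deriv, E1gen x hx.1 hx.2.1 hx.2.2]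
  have h_1 : deriv (fun x => deriv (fun s : ℝ => s ^ 2 * (s + 2) / (s ^ 2 + s + 1)) x
        / deriv (fun s : ℝ => s ^ 3 * (s + 2) / (2 * s + 1)) x) s
      = _ := hev.deriv_eq.trans (hY1' s hs0 hsm1).deriv
  rw [h_1, h_t, (hdy s).deriv, E1gen s hs0 hsm1 hq]
  have E2 : ((16*s ^ 3 + 24*s ^ 2 + 42*s + 17)
          * (6*s ^ 6 + 18*s ^ 5 + 30*s ^ 4 + 30*s ^ 3 + 18*s ^ 2 + 6*s)
        - (4*s ^ 4 + 8*s ^ 3 + 21*s ^ 2 + 17*s + 4)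
          * (36*s ^ 5 + 90*s ^ 4 + 120*s ^ 3 + 90*s ^ 2 + 36*s + 6))
        / (6*s ^ 6 + 18*s ^ 5 + 30*s ^ 4 + 30*s ^ 3 + 18*s ^ 2 + 6*s) ^ 2
        / ((6*s ^ 4 + 12*s ^ 3 + 6*s ^ 2) / (2*s + 1) ^ 2)
      = -(192*s ^ 9 + 864*s ^ 8 + 3024*s ^ 7 + 6552*s ^ 6 + 8208*s ^ 5 + 6156*s ^ 4
            + 2952*s ^ 3 + 972*s ^ 2 + 216*s + 24)
          / (216*s ^ 4*(s + 1) ^ 4*(s ^ 2 + s + 1) ^ 3) := by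
    rw [div_div_div_eq, div_eq_div_iff (mul_ne_zero (pow_ne_zero _ hD) hC)
      (mul_ne_zero (mul_ne_zero (mul_ne_zero (by norm_num)
        (pow_ne_zero _ hs0)) (pow_ne_zero _ hsm1)) (pow_ne_zero _ (hp_pos s)))]
    ring
  rw [E2]
  have ey1 : s ^ 2 * (s + 2) / (s ^ 2 + s + 1) - 1
      = (s - 1) * (s + 1) ^ 2 / (s ^ 2 + s + 1) := by
    rw [div_sub' (hp_pos s)]; ring_nf
  have et1 : s ^ 3 * (s + 2) / (2 * s + 1) - 1
      = (s - 1) * (s + 1) ^ 3 / (2 * s + 1) := by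
    rw [div_sub' hq]; ring_nf
  have eyt : s ^ 2 * (s + 2) / (s ^ 2 + s + 1) - s ^ 3 * (s + 2) / (2 * s + 1)
      = -(s ^ 2 * (s + 2) * (s - 1) * (s + 1) ^ 2) / ((s ^ 2 + s + 1) * (2 * s + 1)) := by
    rw [div_sub_div _ _ (hp_pos s) hq]; ring_nf
  rw [ey1, et1, eyt]
  have hp : s ^ 2 + s + 1 ≠ 0 := hp_pos s
  have hA1 : s ^ 2 * (s + 2) ≠ 0 := mul_ne_zero (pow_ne_zero _ hs0) hs2
  have hA2 : (s - 1) * (s + 1) ^ 2 ≠ 0 := mul_ne_zero hs1 (pow_ne_zero _ hsm1)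
  have hA3 : -(s ^ 2 * (s + 2) * (s - 1) * (s + 1) ^ 2) ≠ 0 :=
    neg_ne_zero.mpr (mul_ne_zero (mul_ne_zero hA1 hs1) (pow_ne_zero _ hsm1))
  have hT : s ^ 3 * (s + 2) ≠ 0 := mul_ne_zero (pow_ne_zero _ hs0) hs2
  have hT1 : (s - 1) * (s + 1) ^ 3 ≠ 0 := mul_ne_zero hs1 (pow_ne_zero _ hsm1)
  have hG1 : 1 / (s ^ 2 * (s + 2) / (s ^ 2 + s + 1)) + 1 / ((s - 1) * (s + 1) ^ 2 / (s ^ 2 + s + 1)) +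
              1 / (-(s ^ 2 * (s + 2) * (s - 1) * (s + 1) ^ 2) / ((s ^ 2 + s + 1) * (2 * s + 1)))
      = (s ^ 2 + s + 1) * (2 * s + 1) / (s ^ 2 * (s + 1) ^ 2) := by
    rw [one_div_div, one_div_div, one_div_div, div_add_div _ _ hA1 hA2,
      div_add_div _ _ (mul_ne_zero hA1 hA2) hA3,
      div_eq_div_iff (mul_ne_zero (mul_ne_zero hA1 hA2) hA3)
        (mul_ne_zero (pow_ne_zero _ hs0) (pow_ne_zero _ hsm1))]
    ring
  have hG2 : 1 / (s ^ 3 * (s + 2) / (2 * s + 1)) + 1 / ((s - 1) * (s + 1) ^ 3 / (2 * s + 1)) +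
            1 / (-(s ^ 2 * (s + 2) * (s - 1) * (s + 1) ^ 2) / ((s ^ 2 + s + 1) * (2 * s + 1)))
      = (2 * s + 1) * (s ^ 4 + 2 * s ^ 3 - 2 * s ^ 2 - 3 * s - 1)
          / (s ^ 3 * (s + 1) ^ 3 * (s - 1) * (s + 2)) := by
    rw [one_div_div, one_div_div, one_div_div, div_add_div _ _ hT hT1,
      div_add_div _ _ (mul_ne_zero hT hT1) hA3,
      div_eq_div_iff (mul_ne_zero (mul_ne_zero hT hT1) hA3)
        (mul_ne_zero (mul_ne_zero (mul_ne_zero (pow_ne_zero _ hs0) (pow_ne_zero _ hsm1)) hs1) hs2)]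
    ring
  have hG3 : s ^ 2 * (s + 2) / (s ^ 2 + s + 1) * ((s - 1) * (s + 1) ^ 2 / (s ^ 2 + s + 1)) *
            (-(s ^ 2 * (s + 2) * (s - 1) * (s + 1) ^ 2) / ((s ^ 2 + s + 1) * (2 * s + 1))) /
          ((s ^ 3 * (s + 2) / (2 * s + 1)) ^ 2 * ((s - 1) * (s + 1) ^ 3 / (2 * s + 1)) ^ 2)
      = -((2 * s + 1) ^ 3) / (s ^ 2 * (s + 1) ^ 2 * (s ^ 2 + s + 1) ^ 3) := by
    rw [div_mul_div_comm, div_mul_div_comm, div_pow, div_pow, div_mul_div_comm, div_div_div_eq,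
      div_eq_div_iff (mul_ne_zero (mul_ne_zero (mul_ne_zero hp hp) (mul_ne_zero hp hq))
          (mul_ne_zero (pow_ne_zero _ hT) (pow_ne_zero _ hT1)))
        (mul_ne_zero (mul_ne_zero (pow_ne_zero _ hs0) (pow_ne_zero _ hsm1)) (pow_ne_zero _ hp))]
    ring
  have hG4 : 1 / 8 + -1 / 8 * (s ^ 3 * (s + 2) / (2 * s + 1)) / (s ^ 2 * (s + 2) / (s ^ 2 + s + 1)) ^ 2 +
            1 / 8 * ((s - 1) * (s + 1) ^ 3 / (2 * s + 1)) / ((s - 1) * (s + 1) ^ 2 / (s ^ 2 + s + 1)) ^ 2 +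
          3 / 8 * (s ^ 3 * (s + 2) / (2 * s + 1)) * ((s - 1) * (s + 1) ^ 3 / (2 * s + 1)) /
            (-(s ^ 2 * (s + 2) * (s - 1) * (s + 1) ^ 2) / ((s ^ 2 + s + 1) * (2 * s + 1))) ^ 2
      = (10 * s ^ 4 + 20 * s ^ 3 + 22 * s ^ 2 + 12 * s + 8) / (16 * s * (s + 2) * (s - 1) * (s + 1)) := by
    field_simp
    have hq' : s * 2 + 1 ≠ 0 := by rw [mul_comm]; exact hq
    field_simp
    ring
  rw [hG1, hG2, hG3, hG4]
  have hDA : (72 * s ^ 4 * (s + 1) ^ 4 * (s ^ 2 + s + 1) ^ 3 : ℝ) ≠ 0 :=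
    mul_ne_zero (mul_ne_zero (mul_ne_zero (by norm_num) (pow_ne_zero _ hs0))
      (pow_ne_zero _ hsm1)) (pow_ne_zero _ hp)
  have hDB : (6 * s ^ 4 * (s + 1) ^ 4 * (s - 1) * (s + 2) * (s ^ 2 + s + 1) ^ 2 : ℝ) ≠ 0 :=
    mul_ne_zero (mul_ne_zero (mul_ne_zero (mul_ne_zero (mul_ne_zero (by norm_num)
      (pow_ne_zero _ hs0)) (pow_ne_zero _ hsm1)) hs1) hs2) (pow_ne_zero _ hp)
  have hDC : (16 * s ^ 3 * (s + 1) ^ 3 * (s - 1) * (s + 2) * (s ^ 2 + s + 1) ^ 3 : ℝ) ≠ 0 :=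
    mul_ne_zero (mul_ne_zero (mul_ne_zero (mul_ne_zero (mul_ne_zero (by norm_num)
      (pow_ne_zero _ hs0)) (pow_ne_zero _ hsm1)) hs1) hs2) (pow_ne_zero _ hp)
  have hA : 1 / 2 * ((s ^ 2 + s + 1) * (2 * s + 1) / (s ^ 2 * (s + 1) ^ 2)) *
        ((4 * s ^ 4 + 8 * s ^ 3 + 21 * s ^ 2 + 17 * s + 4) /
          (6 * s ^ 6 + 18 * s ^ 5 + 30 * s ^ 4 + 30 * s ^ 3 + 18 * s ^ 2 + 6 * s)) ^ 2
      = (2 * s + 1) ^ 5 * (s ^ 4 + 2 * s ^ 3 + 9 * s ^ 2 + 8 * s + 16)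
          / (72 * s ^ 4 * (s + 1) ^ 4 * (s ^ 2 + s + 1) ^ 3) := by
    have hD1 : (6 * s ^ 6 + 18 * s ^ 5 + 30 * s ^ 4 + 30 * s ^ 3 + 18 * s ^ 2 + 6 * s : ℝ) ≠ 0 := by
      have e : (6 * s ^ 6 + 18 * s ^ 5 + 30 * s ^ 4 + 30 * s ^ 3 + 18 * s ^ 2 + 6 * s : ℝ)
          = 6 * s * (s + 1) * (s ^ 2 + s + 1) ^ 2 := by ring
      rw [e]
      exact mul_ne_zero (mul_ne_zero (mul_ne_zero (by norm_num) hs0) hsm1) (pow_ne_zero _ hp)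
    rw [div_pow, div_mul_div_comm, div_mul_div_comm,
      div_eq_div_iff (mul_ne_zero (mul_ne_zero (by norm_num)
        (mul_ne_zero (pow_ne_zero _ hs0) (pow_ne_zero _ hsm1))) (pow_ne_zero _ hD1)) hDA]
    ring
  have hB : (2 * s + 1) * (s ^ 4 + 2 * s ^ 3 - 2 * s ^ 2 - 3 * s - 1)
          / (s ^ 3 * (s + 1) ^ 3 * (s - 1) * (s + 2)) *
        ((4 * s ^ 4 + 8 * s ^ 3 + 21 * s ^ 2 + 17 * s + 4) /
          (6 * s ^ 6 + 18 * s ^ 5 + 30 * s ^ 4 + 30 * s ^ 3 + 18 * s ^ 2 + 6 * s))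
      = (2 * s + 1) ^ 3 * (s ^ 6 + 3 * s ^ 5 + 4 * s ^ 4 + 3 * s ^ 3 - 12 * s ^ 2 - 13 * s - 4)
          / (6 * s ^ 4 * (s + 1) ^ 4 * (s - 1) * (s + 2) * (s ^ 2 + s + 1) ^ 2) := by
    have hD1 : (6 * s ^ 6 + 18 * s ^ 5 + 30 * s ^ 4 + 30 * s ^ 3 + 18 * s ^ 2 + 6 * s : ℝ) ≠ 0 := by
      have e : (6 * s ^ 6 + 18 * s ^ 5 + 30 * s ^ 4 + 30 * s ^ 3 + 18 * s ^ 2 + 6 * s : ℝ)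
          = 6 * s * (s + 1) * (s ^ 2 + s + 1) ^ 2 := by ring
      rw [e]
      exact mul_ne_zero (mul_ne_zero (mul_ne_zero (by norm_num) hs0) hsm1) (pow_ne_zero _ hp)
    rw [div_mul_div_comm,
      div_eq_div_iff (mul_ne_zero (mul_ne_zero (mul_ne_zero (mul_ne_zero
        (pow_ne_zero _ hs0) (pow_ne_zero _ hsm1)) hs1) hs2) hD1) hDB]
    ring
  have hC : -(2 * s + 1) ^ 3 / (s ^ 2 * (s + 1) ^ 2 * (s ^ 2 + s + 1) ^ 3) *
        ((10 * s ^ 4 + 20 * s ^ 3 + 22 * s ^ 2 + 12 * s + 8) / (16 * s * (s + 2) * (s - 1) * (s + 1)))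
      = -((2 * s + 1) ^ 3 * (10 * s ^ 4 + 20 * s ^ 3 + 22 * s ^ 2 + 12 * s + 8))
          / (16 * s ^ 3 * (s + 1) ^ 3 * (s - 1) * (s + 2) * (s ^ 2 + s + 1) ^ 3) := by
    rw [div_mul_div_comm,
      div_eq_div_iff (mul_ne_zero (mul_ne_zero (mul_ne_zero (pow_ne_zero _ hs0)
          (pow_ne_zero _ hsm1)) (pow_ne_zero _ hp))
        (mul_ne_zero (mul_ne_zero (mul_ne_zero (mul_ne_zero (by norm_num) hs0) hs2) hs1) hsm1)) hDC]
    ring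
  rw [hA, hB, hC, div_sub_div _ _ hDA hDB, div_add_div _ _ (mul_ne_zero hDA hDB) hDC,
    div_eq_div_iff (mul_ne_zero (mul_ne_zero (mul_ne_zero (by norm_num : (216:ℝ) ≠ 0)
        (pow_ne_zero _ hs0)) (pow_ne_zero _ hsm1)) (pow_ne_zero _ hp))
      (mul_ne_zero (mul_ne_zero hDA hDB) hDC)]
  ring
end

section
/- Let y(s) = 9s(2s³−3s+4)/(4(s+1)(s−1)²(2s²+6s+1)) and t(s) = 27s²/(4(s²−1)³). Then on any open set of real s where the denominators and dt/ds are nonzero, the function Y defined locally by Y(t(s)) = y(s) satisfies the sixth Painlevé equation with parameters α = 1/18, β = −1/8, γ = 1/32, δ = 3/8. -/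
noncomputable section

def PA (s : ℝ) : ℝ := 36*s + (-27)*s^2 + 18*s^4
def PA1 (s : ℝ) : ℝ := 36 + (-54)*s + 72*s^3
def PB (s : ℝ) : ℝ := 4 + 20*s + (-20)*s^2 + (-28)*s^3 + 16*s^4 + 8*s^5
def PB1 (s : ℝ) : ℝ := 20 + (-40)*s + (-84)*s^2 + 64*s^3 + 40*s^4
def PC (s : ℝ) : ℝ := 27*s^2
def PC1 (s : ℝ) : ℝ := 54*s
def PE (s : ℝ) : ℝ := (-4) + 12*s^2 + (-12)*s^4 + 4*s^6
def PE1 (s : ℝ) : ℝ := 24*s + (-48)*s^3 + 24*s^5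
def PG (s : ℝ) : ℝ := 144 + (-216)*s + 180*s^2 + 2304*s^3 + (-1404)*s^4 + (-1008)*s^5 + 144*s^6 + (-144)*s^8
def PH (s : ℝ) : ℝ := (-216)*s + 648*s^5 + (-432)*s^7
def PU (s : ℝ) : ℝ := 4 + 2*s + (-3)*s^2 + 68*s^3 + 94*s^4 + (-42)*s^5 + (-91)*s^6 + (-20)*s^7 + (-8)*s^9 + (-4)*s^10
def PU1 (s : ℝ) : ℝ := 2 + (-6)*s + 204*s^2 + 376*s^3 + (-210)*s^4 + (-546)*s^5 + (-140)*s^6 + (-72)*s^8 + (-40)*s^9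
def PV (s : ℝ) : ℝ := (-6)*s + (-72)*s^2 + (-252)*s^3 + (-288)*s^4 + (-504)*s^5 + (-288)*s^6 + (-48)*s^7
def PV1 (s : ℝ) : ℝ := (-6) + (-144)*s + (-756)*s^2 + (-1152)*s^3 + (-2520)*s^4 + (-1728)*s^5 + (-336)*s^6
def PG10 (s : ℝ) : ℝ := 1 + (-2)*s + (-3)*s^2 + 8*s^3 + 2*s^4 + (-12)*s^5 + 2*s^6 + 8*s^7 + (-3)*s^8 + (-2)*s^9 + 1*s^10

lemma hasDerivAt_trans {f g : ℝ → ℝ} {f' g' : ℝ} {x : ℝ} (hf : HasDerivAt f f' x)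
    (h : ∀ s, f s = g s) (h' : f' = g') : HasDerivAt g g' x := by
  rw [← h', ← funext h]; exact hf

lemma poly10 (x c0 c1 c2 c3 c4 c5 c6 c7 c8 c9 c10 : ℝ) :
    HasDerivAt (fun s : ℝ => c0 + c1*s + c2*s^2 + c3*s^3 + c4*s^4 + c5*s^5 + c6*s^6 + c7*s^7
      + c8*s^8 + c9*s^9 + c10*s^10)
      (c1 + 2*c2*x + 3*c3*x^2 + 4*c4*x^3 + 5*c5*x^4 + 6*c6*x^5 + 7*c7*x^6 + 8*c8*x^7
        + 9*c9*x^8 + 10*c10*x^9) x := by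
  have H := (((((((((((hasDerivAt_const x c0).add ((hasDerivAt_id x).const_mul c1)).add
    ((hasDerivAt_pow 2 x).const_mul c2)).add ((hasDerivAt_pow 3 x).const_mul c3)).add
    ((hasDerivAt_pow 4 x).const_mul c4)).add ((hasDerivAt_pow 5 x).const_mul c5)).add
    ((hasDerivAt_pow 6 x).const_mul c6)).add ((hasDerivAt_pow 7 x).const_mul c7)).add
    ((hasDerivAt_pow 8 x).const_mul c8)).add ((hasDerivAt_pow 9 x).const_mul c9)).add
    ((hasDerivAt_pow 10 x).const_mul c10))
  convert H using 1
  · rfl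
  · rfl
  · funext s; simp only [Pi.add_apply, id]
  norm_num; ring

lemma dPA (x : ℝ) : HasDerivAt PA (PA1 x) x :=
  hasDerivAt_trans (poly10 x 0 36 (-27) 0 18 0 0 0 0 0 0)
    (fun s => by simp only [PA]; ring) (by simp only [PA1]; ring)

lemma dPB (x : ℝ) : HasDerivAt PB (PB1 x) x :=
  hasDerivAt_trans (poly10 x 4 20 (-20) (-28) 16 8 0 0 0 0 0)
    (fun s => by simp only [PB]; ring) (by simp only [PB1]; ring)

lemma dPC (x : ℝ) : HasDerivAt PC (PC1 x) x :=
  hasDerivAt_trans (poly10 x 0 0 27 0 0 0 0 0 0 0 0)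
    (fun s => by simp only [PC]; ring) (by simp only [PC1]; ring)

lemma dPE (x : ℝ) : HasDerivAt PE (PE1 x) x :=
  hasDerivAt_trans (poly10 x (-4) 0 12 0 (-12) 0 4 0 0 0 0)
    (fun s => by simp only [PE]; ring) (by simp only [PE1]; ring)

lemma dPU (x : ℝ) : HasDerivAt PU (PU1 x) x :=
  hasDerivAt_trans (poly10 x 4 2 (-3) 68 94 (-42) (-91) (-20) 0 (-8) (-4))
    (fun s => by simp only [PU]; ring) (by simp only [PU1]; ring)

lemma dPV (x : ℝ) : HasDerivAt PV (PV1 x) x :=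
  hasDerivAt_trans (poly10 x 0 (-6) (-72) (-252) (-288) (-504) (-288) (-48) 0 0 0)
    (fun s => by simp only [PV]; ring) (by simp only [PV1]; ring)

end

set_option maxHeartbeats 8000000 in
/-- Octahedral solution 7 (6 branches): y(s) = 9s(2s³−3s+4)/(4(s+1)(s−1)²(2s²+6s+1)), t(s) = 27s²/(4(s²−1)³) solves Painlevé VI with α = 1/18, β = −1/8, γ = 1/32, δ = 3/8 (θ = (1/2,1/2,1/4,2/3)). -/
theorem parametric_PVI_solution_14 :
    let y : ℝ → ℝ := fun s => 9 * s * (2 * s ^ 3 - 3 * s + 4) / (4 * (s + 1) * (s - 1) ^ 2 * (2 * s ^ 2 + 6 * s + 1))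
    let t : ℝ → ℝ := fun s => 27 * s ^ 2 / (4 * (s ^ 2 - 1) ^ 3)
    let Y₁ : ℝ → ℝ := fun s => deriv y s / deriv t s
    let Y₂ : ℝ → ℝ := fun s => deriv Y₁ s / deriv t s
    ∀ s : ℝ, (s + 1) * (s - 1) * (2 * s ^ 2 + 6 * s + 1) ≠ 0 → deriv t s ≠ 0 →
      t s ≠ 0 → t s ≠ 1 → y s ≠ 0 → y s ≠ 1 → y s ≠ t s →
      Y₂ s =
        (1 / 2) * (1 / y s + 1 / (y s - 1) + 1 / (y s - t s)) * (Y₁ s) ^ 2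
          - (1 / t s + 1 / (t s - 1) + 1 / (y s - t s)) * Y₁ s
          + y s * (y s - 1) * (y s - t s) / ((t s) ^ 2 * (t s - 1) ^ 2) *
            ((1 / 18) + (-1 / 8) * t s / (y s) ^ 2 + (1 / 32) * (t s - 1) / (y s - 1) ^ 2
              + (3 / 8) * t s * (t s - 1) / (y s - t s) ^ 2) := by
  intro y t Y₁ Y₂ s hd hdt ht0 ht1 hy0 hy1 hyt
  have hs1 : s + 1 ≠ 0 := fun h => hd (by rw [h]; ring)
  have hs2 : s - 1 ≠ 0 := fun h => hd (by rw [h]; ring)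
  have hs3 : 2 * s ^ 2 + 6 * s + 1 ≠ 0 := fun h => hd (by rw [h]; ring)
  have hB : PB s ≠ 0 := by
    have : PB s = 4 * (s + 1) * (s - 1) ^ 2 * (2 * s ^ 2 + 6 * s + 1) := by
      simp only [PB]; ring
    rw [this]
    exact mul_ne_zero (mul_ne_zero (mul_ne_zero four_ne_zero hs1) (pow_ne_zero 2 hs2)) hs3
  have hE : PE s ≠ 0 := by
    have : PE s = 4 * (s + 1) ^ 3 * (s - 1) ^ 3 := by simp only [PE]; ring
    rw [this]
    exact mul_ne_zero (mul_ne_zero four_ne_zero (pow_ne_zero 3 hs1)) (pow_ne_zero 3 hs2)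
  -- derivative of t
  have hT : ∀ x : ℝ, PE x ≠ 0 → HasDerivAt t (PH x / PE x ^ 2) x := by
    intro x hEx
    have h1 := (dPC x).div (dPE x) hEx
    have h2 : (PC1 x * PE x - PC x * PE1 x) / PE x ^ 2 = PH x / PE x ^ 2 := by
      congr 1; simp only [PC, PC1, PE, PE1, PH]; ring
    rw [h2] at h1
    exact hasDerivAt_trans h1
      (fun u => by show PC u / PE u = 27 * u ^ 2 / (4 * (u ^ 2 - 1) ^ 3)
                   congr 1 <;> simp only [PC, PE] <;> ring) rfl
  -- derivative of y
  have hY : ∀ x : ℝ, PB x ≠ 0 → HasDerivAt y (PG x / PB x ^ 2) x := by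
    intro x hBx
    have h1 := (dPA x).div (dPB x) hBx
    have h2 : (PA1 x * PB x - PA x * PB1 x) / PB x ^ 2 = PG x / PB x ^ 2 := by
      congr 1; simp only [PA, PA1, PB, PB1, PG]; ring
    rw [h2] at h1
    exact hasDerivAt_trans h1
      (fun u => by
        show PA u / PB u =
          9 * u * (2 * u ^ 3 - 3 * u + 4) / (4 * (u + 1) * (u - 1) ^ 2 * (2 * u ^ 2 + 6 * u + 1))
        congr 1 <;> simp only [PA, PB] <;> ring) rfl
  have hdt' : deriv t s = PH s / PE s ^ 2 := (hT s hE).deriv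
  have hH : PH s ≠ 0 := by
    intro h0; apply hdt; rw [hdt', h0, zero_div]
  have hV : PV s ≠ 0 := by
    intro h0
    have key : PB s ^ 2 * PH s = 576 * PV s * PG10 s := by
      simp only [PB, PH, PV, PG10]; ring
    have := mul_ne_zero (pow_ne_zero 2 hB) hH
    apply this
    rw [key, h0]; ring
  -- eventual nonvanishing
  have hcont : ContinuousAt (fun x : ℝ => PB x * PE x * PH x * PV x) s := by
    simp only [PB, PE, PH, PV]; fun_prop
  have hev : ∀ᶠ x in nhds s, PB x * PE x * PH x * PV x ≠ 0 :=
    hcont.eventually_ne (mul_ne_zero (mul_ne_zero (mul_ne_zero hB hE) hH) hV)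
  have hY1ev : Y₁ =ᶠ[nhds s] fun x => PU x / PV x := by
    filter_upwards [hev] with x hx
    have hBx : PB x ≠ 0 := fun h => hx (by rw [h]; ring)
    have hEx : PE x ≠ 0 := fun h => hx (by rw [h]; ring)
    have hHx : PH x ≠ 0 := fun h => hx (by rw [h]; ring)
    have hVx : PV x ≠ 0 := fun h => hx (by rw [h]; ring)
    show deriv y x / deriv t x = PU x / PV x
    rw [(hY x hBx).deriv, (hT x hEx).deriv]
    field_simp
    simp only [PG, PE, PU, PV, PB, PH]; ring
  -- value of Y₁ and its derivative at s
  have hY1s : Y₁ s = PU s / PV s := hY1ev.eq_of_nhds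
  have hY1d : deriv Y₁ s = (PU1 s * PV s - PU s * PV1 s) / PV s ^ 2 := by
    rw [hY1ev.deriv_eq]
    exact ((dPU s).div (dPV s) hV).deriv
  have hY2s : Y₂ s = ((PU1 s * PV s - PU s * PV1 s) / PV s ^ 2) / (PH s / PE s ^ 2) := by
    show deriv Y₁ s / deriv t s = _
    rw [hY1d, hdt']
  have hys : y s = PA s / PB s := by
    show 9 * s * (2 * s ^ 3 - 3 * s + 4) / (4 * (s + 1) * (s - 1) ^ 2 * (2 * s ^ 2 + 6 * s + 1))
      = PA s / PB s
    congr 1 <;> simp only [PA, PB] <;> ring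
  have hts : t s = PC s / PE s := by
    show 27 * s ^ 2 / (4 * (s ^ 2 - 1) ^ 3) = PC s / PE s
    congr 1 <;> simp only [PC, PE] <;> ring
  have hA : PA s ≠ 0 := by
    intro h; apply hy0; rw [hys, h, zero_div]
  have hC : PC s ≠ 0 := by
    intro h; apply ht0; rw [hts, h, zero_div]
  have hAB : PA s - PB s ≠ 0 := by
    intro h; apply hy1
    rw [hys, show PA s = PB s by linarith, div_self hB]
  have hCE : PC s - PE s ≠ 0 := by
    intro h; apply ht1
    rw [hts, show PC s = PE s by linarith, div_self hE]
  have hX : PA s * PE s - PC s * PB s ≠ 0 := by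
    intro h; apply hyt
    rw [hys, hts, div_eq_div_iff hB hE]; linarith
  have hX' : PA s * PE s - PB s * PC s ≠ 0 := by
    rw [show PA s * PE s - PB s * PC s = PA s * PE s - PC s * PB s by ring]; exact hX
  rw [hY2s, hys, hts, hY1s]
  field_simp [show PE s * PA s - PB s * PC s ≠ 0 by rw [mul_comm]; exact hX']
  simp only [PA, PB, PC, PE, PH, PU, PU1, PV, PV1]
  ring
end
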